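/- Let f : [0,∞) → ℝ be bounded and continuous, let 0 < r ≤ 1, and let x ≥ 0 be such that the Lipschitz-type maximal quantity κ_r(f, x) = sup{|f(s) − f(x)|/|s − x|^r : s ≥ 0, s ≠ x} is finite. Then for every positive integer n and every real α with 0 < α ≤ 1/n: |U_n^[α](f; x) − f(x)| ≤ κ_r(f, x) · (Θ_{n,2}^[α](x))^(r/2). -/

import Mathlib

open MeasureTheory Filter

noncomputable section

/-- The Szász basis function `e^(-nu) (nu)^i / i!`. -/
def szaszBasis (n i : ℕ) (u : ℝ) : ℝ :=
  Real.exp (-(n : ℝ) * u) * ((n : ℝ) * u) ^ i / (Nat.factorial i : ℝ)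

/-- The rising factorial `x^(i,-α) = ∏_{j=0}^{i-1} (x + jα)` with increment `α`. -/
def risingFac (x α : ℝ) (i : ℕ) : ℝ :=
  ∏ j ∈ Finset.range i, (x + (j : ℝ) * α)

/-- The Durrmeyer modification of the generalized Szász-Mirakjan operators:
`U_n^[α](f; x) = n Σ_i (1+nα)^(−x/α) (α+1/n)^(−i) x^(i,−α)/i! ∫_0^∞ e^(−nu)(nu)^i/i! f(u) du`. -/
def U (n : ℕ) (α : ℝ) (f : ℝ → ℝ) (x : ℝ) : ℝ :=
  (n : ℝ) * ∑' i : ℕ,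
    (1 + (n : ℝ) * α) ^ (-x / α) * (α + 1 / (n : ℝ)) ^ (-(i : ℤ)) *
      (risingFac x α i / (Nat.factorial i : ℝ)) *
      ∫ u in Set.Ioi (0 : ℝ), szaszBasis n i u * f u

/-- The `m`-th central moment `Θ_{n,m}^[α](x) = U_n^[α]((t−x)^m; x)`. -/
def theta (n : ℕ) (α : ℝ) (m : ℕ) (x : ℝ) : ℝ :=
  U n α (fun t => (t - x) ^ m) x

end

noncomputable section Aux

lemma risingFac_zero (x α : ℝ) : risingFac x α 0 = 1 := Finset.prod_range_zero _

lemma risingFac_succ (x α : ℝ) (i : ℕ) :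
    risingFac x α (i + 1) = risingFac x α i * (x + i * α) := Finset.prod_range_succ _ _

lemma risingFac_nonneg {x α : ℝ} (hx : 0 ≤ x) (hα : 0 ≤ α) (i : ℕ) : 0 ≤ risingFac x α i :=
  Finset.prod_nonneg fun j _ => by positivity

/-- `bc a i = a(a+1)⋯(a+i-1)/i!`, the generalized binomial coefficient. -/
def bc (a : ℝ) (i : ℕ) : ℝ := risingFac a 1 i / (Nat.factorial i : ℝ)

lemma bc_zero (a : ℝ) : bc a 0 = 1 := by simp [bc, risingFac_zero]

lemma bc_nonneg {a : ℝ} (ha : 0 ≤ a) (i : ℕ) : 0 ≤ bc a i :=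
  div_nonneg (risingFac_nonneg ha zero_le_one i) (by positivity)

lemma bc_succ (a : ℝ) (i : ℕ) : bc a (i + 1) * (i + 1) = bc a i * (a + i) := by
  have h1 : ((Nat.factorial i : ℝ)) ≠ 0 := by positivity
  have h2 : ((i : ℝ) + 1) ≠ 0 := by positivity
  simp only [bc, risingFac_succ, Nat.factorial_succ, mul_one]
  push_cast
  field_simp

/-- ratio test helper -/
lemma summable_of_ratio_tendsto {f ρ : ℕ → ℝ} (h0 : ∀ i, 0 ≤ f i)
    (hf : ∀ i, f (i + 1) = ρ i * f i) (hρ0 : ∀ i, 0 ≤ ρ i) {L : ℝ} (hL : L < 1)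
    (hρ : Tendsto ρ atTop (nhds L)) : Summable f := by
  set r : ℝ := (max L 0 + 1) / 2 with hr
  have hLr : L < r := by
    have : L ≤ max L 0 := le_max_left _ _
    have h2 : max L 0 < 1 := by
      rcases le_or_gt L 0 with h | h
      · simpa [max_eq_right h]
      · simpa [max_eq_left h.le]
    simp only [hr]; nlinarith [le_max_left L 0]
  have hr1 : r < 1 := by
    have h2 : max L 0 < 1 := by
      rcases le_or_gt L 0 with h | h
      · simpa [max_eq_right h]
      · simpa [max_eq_left h.le]
    simp only [hr]; linarith
  refine summable_of_ratio_norm_eventually_le hr1 ?_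
  filter_upwards [hρ.eventually_lt_const hLr] with i hi
  rw [Real.norm_of_nonneg (h0 _), Real.norm_of_nonneg (h0 _), hf]
  exact mul_le_mul_of_nonneg_right hi.le (h0 i)

lemma bc_succ' (a : ℝ) (i : ℕ) : bc a (i + 1) = bc a i * ((a + i) / (i + 1)) := by
  have h2 : ((i : ℝ) + 1) ≠ 0 := by positivity
  rw [mul_div_assoc', eq_div_iff h2, bc_succ]

lemma tendsto_aux (c : ℝ) : Tendsto (fun i : ℕ => c / ((i : ℝ) + 1)) atTop (nhds 0) := by
  have h := (tendsto_const_div_atTop_nhds_zero_nat c).comp (tendsto_add_atTop_nat 1)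
  have e : (fun i : ℕ => c / ((i : ℝ) + 1)) = (fun n : ℕ => c / (n : ℝ)) ∘ (· + 1) := by
    funext i
    simp only [Function.comp]
    push_cast
    ring
  rw [e]
  exact h

lemma summable_bc {a q : ℝ} (ha : 0 ≤ a) (hq0 : 0 ≤ q) (hq1 : q < 1) :
    Summable (fun i => bc a i * q ^ i) := by
  refine summable_of_ratio_tendsto (f := fun i => bc a i * q ^ i)
    (ρ := fun i => (a + i) / (i + 1) * q)
    (fun i => mul_nonneg (bc_nonneg ha i) (pow_nonneg hq0 i))
    (fun i => ?_)
    (fun i => mul_nonneg (div_nonneg (add_nonneg ha (Nat.cast_nonneg i)) (by positivity)) hq0)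
    hq1 ?_
  · show bc a (i + 1) * q ^ (i + 1) = (a + i) / (i + 1) * q * (bc a i * q ^ i)
    rw [bc_succ', pow_succ]
    ring
  · have h : Tendsto (fun i : ℕ => ((a - 1) / ((i : ℝ) + 1) + 1) * q) atTop (nhds ((0 + 1) * q)) :=
      (((tendsto_aux (a - 1)).add tendsto_const_nhds)).mul tendsto_const_nhds
    rw [zero_add, one_mul] at h
    refine h.congr fun i => ?_
    have h2 : ((i : ℝ) + 1) ≠ 0 := by positivity
    field_simp
    ring

lemma summable_bc_deriv {a q : ℝ} (ha : 0 ≤ a) (hq0 : 0 ≤ q) (hq1 : q < 1) :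
    Summable (fun i : ℕ => bc a i * ((i : ℝ) * q ^ (i - 1))) := by
  have hS : Summable (fun i : ℕ => bc a (i + 1) * (((i : ℝ) + 1) * q ^ i)) := by
    refine summable_of_ratio_tendsto (f := fun i => bc a (i + 1) * (((i : ℝ) + 1) * q ^ i))
      (ρ := fun i => (a + ((i : ℝ) + 1)) / ((i : ℝ) + 1) * q)
      (fun i => mul_nonneg (bc_nonneg ha _) (mul_nonneg (by positivity) (pow_nonneg hq0 i)))
      (fun i => ?_)
      (fun i => mul_nonneg (div_nonneg (add_nonneg ha (by positivity)) (by positivity)) hq0)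
      hq1 ?_
    · have h2 : ((i : ℝ) + 1) ≠ 0 := by positivity
      have h3 : ((i : ℝ) + 1 + 1) ≠ 0 := by positivity
      rw [bc_succ' a (i + 1), pow_succ]
      push_cast
      field_simp
    · have h : Tendsto (fun i : ℕ => (a / ((i : ℝ) + 1) + 1) * q) atTop (nhds ((0 + 1) * q)) :=
        (((tendsto_aux a).add tendsto_const_nhds)).mul tendsto_const_nhds
      rw [zero_add, one_mul] at h
      refine h.congr fun i => ?_
      have h2 : ((i : ℝ) + 1) ≠ 0 := by positivity
      field_simp
  refine (summable_nat_add_iff (f := fun i : ℕ => bc a i * ((i : ℝ) * q ^ (i - 1))) 1).mp ?_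
  refine hS.congr fun i => ?_
  simp only [Nat.add_sub_cancel]
  push_cast
  ring


lemma pow_sub_one_mul' (i : ℕ) (y : ℝ) : (i : ℝ) * y ^ (i - 1) * y = (i : ℝ) * y ^ i := by
  cases i with
  | zero => simp
  | succ k => simp only [Nat.add_sub_cancel]; rw [mul_assoc, ← pow_succ]

lemma hasSum_bc {a z : ℝ} (ha : 0 ≤ a) (hz0 : 0 ≤ z) (hz1 : z < 1) :
    HasSum (fun i => bc a i * z ^ i) ((1 - z) ^ (-a) : ℝ) := by
  set b : ℝ := (z + 1) / 2 with hb
  have hzb : z < b := by rw [hb]; linarith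
  have hb0 : 0 < b := by rw [hb]; linarith
  have hb1 : b < 1 := by rw [hb]; linarith
  set t : Set ℝ := Set.Ioo (-b) b with htdef
  have ht : IsOpen t := isOpen_Ioo
  have htc : IsPreconnected t := (convex_Ioo (-b) b).isPreconnected
  have h0t : (0 : ℝ) ∈ t := by constructor <;> simp [hb0] <;> linarith
  have hzt : z ∈ t := ⟨by linarith, hzb⟩
  set g : ℕ → ℝ → ℝ := fun i y => bc a i * y ^ i with hgdef
  set g' : ℕ → ℝ → ℝ := fun i y => bc a i * ((i : ℝ) * y ^ (i - 1)) with hg'def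
  have hderiv : ∀ i (y : ℝ), y ∈ t → HasDerivAt (g i) (g' i y) y := fun i y _ =>
    (hasDerivAt_pow i y).const_mul _
  set u : ℕ → ℝ := fun i => bc a i * ((i : ℝ) * b ^ (i - 1)) with hudef
  have hu : Summable u := summable_bc_deriv ha hb0.le hb1
  have habs : ∀ y ∈ t, |y| ≤ b := by
    intro y hy
    rw [abs_le]
    exact ⟨hy.1.le, hy.2.le⟩
  have hbound : ∀ i (y : ℝ), y ∈ t → ‖g' i y‖ ≤ u i := by
    intro i y hy
    have h1 : ‖g' i y‖ = bc a i * ((i : ℝ) * |y| ^ (i - 1)) := by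
      rw [hg'def]
      simp only [Real.norm_eq_abs, abs_mul, abs_pow, abs_of_nonneg (bc_nonneg ha i),
        Nat.abs_cast]
    rw [h1, hudef]
    exact mul_le_mul_of_nonneg_left
      (mul_le_mul_of_nonneg_left (pow_le_pow_left₀ (abs_nonneg y) (habs y hy) _)
        (Nat.cast_nonneg i)) (bc_nonneg ha i)
  have hg0 : Summable (fun i => g i 0) := by
    refine (summable_bc ha le_rfl zero_lt_one).congr fun i => rfl
  have key : ∀ y ∈ t, HasDerivAt (fun w => ∑' i, g i w) (∑' i, g' i y) y := fun y hy =>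
    hasDerivAt_tsum_of_isPreconnected hu ht htc hderiv hbound h0t hg0 hy
  set F : ℝ → ℝ := fun w => ∑' i, g i w with hFdef
  have hsum' : ∀ y ∈ t, Summable (fun i => g' i y) := fun y hy =>
    Summable.of_norm_bounded hu (fun i => hbound i y hy)
  have hsumg : ∀ y ∈ t, Summable (fun i => g i y) := by
    intro y hy
    refine Summable.of_norm_bounded ((summable_bc ha (abs_nonneg y) ?_)) fun i => ?_
    · exact lt_of_le_of_lt (habs y hy) hb1
    · rw [hgdef]
      simp only [Real.norm_eq_abs, abs_mul, abs_pow, abs_of_nonneg (bc_nonneg ha i), le_refl]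
  have hBigId : ∀ y ∈ t, (∑' i, g' i y) * (1 - y) = a * F y := by
    intro y hy
    have Sy := hsum' y hy
    have e2 : (∑' i, g' i y) * y = ∑' i : ℕ, (i : ℝ) * bc a i * y ^ i := by
      rw [← tsum_mul_right]
      congr 1
      funext i
      rw [hg'def]
      simp only []
      rw [mul_assoc, pow_sub_one_mul']
      ring
    have Smul : Summable (fun i : ℕ => (i : ℝ) * bc a i * y ^ i) := by
      refine (Sy.mul_right y).congr fun i => ?_
      rw [hg'def]
      simp only []
      rw [mul_assoc, pow_sub_one_mul']
      ring
    have e1 : (∑' i, g' i y) = ∑' i, bc a (i + 1) * (((i : ℝ) + 1) * y ^ i) := by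
      rw [Summable.tsum_eq_zero_add Sy]
      have : g' 0 y = 0 := by rw [hg'def]; simp
      rw [this, zero_add]
      congr 1
      funext i
      rw [hg'def]
      simp only [Nat.add_sub_cancel]
      push_cast
      ring
    have Sshift : Summable (fun i => bc a (i + 1) * (((i : ℝ) + 1) * y ^ i)) := by
      refine ((summable_nat_add_iff 1).mpr Sy).congr fun i => ?_
      rw [hg'def]
      simp only [Nat.add_sub_cancel]
      push_cast
      ring
    have e3 : (∑' i, g' i y) * (1 - y) = (∑' i, g' i y) - (∑' i, g' i y) * y := by ring
    rw [e3, e2, e1, ← Summable.tsum_sub Sshift Smul]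
    show _ = a * ∑' i : ℕ, g i y
    rw [← tsum_mul_left]
    refine tsum_congr fun i => ?_
    have hbs := bc_succ a i
    rw [hgdef]
    simp only []
    linear_combination (y ^ i) * hbs
  set φ : ℝ → ℝ := fun y => F y * (1 - y) ^ a with hφdef
  have hφd : ∀ y ∈ t, HasDerivAt φ 0 y := by
    intro y hy
    have h1y : 0 < 1 - y := by
      have := hy.2
      linarith [hy.2]
    have hF' := key y hy
    have hrp : HasDerivAt (fun w : ℝ => (1 - w) ^ a) (a * (1 - y) ^ (a - 1) * (-1)) y := by
      have h := Real.hasDerivAt_rpow_const (x := 1 - y) (p := a) (Or.inl h1y.ne')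
      have hid : HasDerivAt (fun w : ℝ => 1 - w) (-1) y := by
        simpa using (hasDerivAt_id y).const_sub 1
      exact h.comp y hid
    have hmul := hF'.mul hrp
    have e1 : (1 - y) ^ a = (1 - y) ^ (a - 1) * (1 - y) := by
      rw [← Real.rpow_add_one h1y.ne' (a - 1)]
      ring_nf
    have hzero : (∑' i, g' i y) * (1 - y) ^ a + F y * (a * (1 - y) ^ (a - 1) * (-1)) = 0 := by
      rw [e1]
      have hb2 := hBigId y hy
      linear_combination (1 - y) ^ (a - 1) * hb2
    rw [← hzero]
    exact hmul
  have hconst := (convex_Ioo (-b) b).norm_image_sub_le_of_norm_hasDerivWithin_le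
    (f' := fun _ => (0 : ℝ)) (C := 0)
    (fun y hy => (hφd y hy).hasDerivWithinAt) (fun y _ => by simp) hzt h0t
  rw [zero_mul] at hconst
  have hφz : φ 0 = φ z :=
    norm_sub_eq_zero_iff.mp (le_antisymm hconst (norm_nonneg _))
  have hφ0 : φ 0 = 1 := by
    rw [hφdef]
    simp only [sub_zero, Real.one_rpow, mul_one, hFdef]
    rw [tsum_eq_single 0 (fun i hi => ?_)]
    · rw [hgdef]; simp [bc_zero]
    · rw [hgdef]
      simp only []
      rw [zero_pow hi, mul_zero]
  have h1z : 0 < 1 - z := by linarith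
  have hFz : F z = (1 - z) ^ (-a) := by
    have h2 : F z * (1 - z) ^ a = 1 := hφz.symm.trans hφ0
    rw [Real.rpow_neg h1z.le]
    exact eq_inv_of_mul_eq_one_left (by linarith [h2])
  have := (hsumg z hzt).hasSum
  rw [show (∑' i, g i z) = F z from rfl, hFz] at this
  exact this


/-- The weights of the operator `U`. -/
def wgt (n : ℕ) (α x : ℝ) (i : ℕ) : ℝ :=
  (1 + (n : ℝ) * α) ^ (-x / α) * (α + 1 / (n : ℝ)) ^ (-(i : ℤ)) *
    (risingFac x α i / (Nat.factorial i : ℝ))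

section Wgt

variable {n : ℕ} {α x : ℝ}

lemma risingFac_eq_bc (hα : 0 < α) (i : ℕ) :
    risingFac x α i = α ^ i * risingFac (x / α) 1 i := by
  have hc : α ^ i = ∏ _j ∈ Finset.range i, α := by
    rw [Finset.prod_const, Finset.card_range]
  rw [risingFac, risingFac, hc, ← Finset.prod_mul_distrib]
  refine Finset.prod_congr rfl fun j _ => ?_
  field_simp

lemma wgt_eq_bc (hn : 0 < n) (hα : 0 < α) (i : ℕ) :
    wgt n α x i = (1 + (n : ℝ) * α) ^ (-x / α) *
      (bc (x / α) i * (α / (α + 1 / (n : ℝ))) ^ i) := by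
  have hN : (0 : ℝ) < n := Nat.cast_pos.mpr hn
  have ht0 : (0 : ℝ) < α + 1 / n := by positivity
  rw [wgt, risingFac_eq_bc hα, bc]
  rw [zpow_neg, zpow_natCast, div_pow, ← inv_pow]
  ring

lemma wgt_nonneg (hn : 0 < n) (hα : 0 < α) (hx : 0 ≤ x) (i : ℕ) : 0 ≤ wgt n α x i := by
  have hN : (0 : ℝ) < n := Nat.cast_pos.mpr hn
  have ht0 : (0 : ℝ) < α + 1 / n := by positivity
  refine mul_nonneg (mul_nonneg ?_ ?_) ?_
  · exact (Real.rpow_pos_of_pos (by positivity) _).le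
  · exact (zpow_pos ht0 _).le
  · exact div_nonneg (risingFac_nonneg hx hα.le i) (by positivity)

lemma hasSum_wgt (hn : 0 < n) (hα : 0 < α) (hx : 0 ≤ x) : HasSum (wgt n α x) 1 := by
  have hN : (0 : ℝ) < n := Nat.cast_pos.mpr hn
  have ht0 : (0 : ℝ) < α + 1 / n := by positivity
  set z : ℝ := α / (α + 1 / n) with hzdef
  have hz0 : 0 ≤ z := by positivity
  have hz1 : z < 1 := by
    rw [hzdef, div_lt_one ht0]
    have : (0 : ℝ) < 1 / n := by positivity
    linarith
  have ha : 0 ≤ x / α := by positivity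
  have h1 := (hasSum_bc ha hz0 hz1).mul_left ((1 + (n : ℝ) * α) ^ (-x / α))
  have h1z : 1 - z = (1 + (n : ℝ) * α)⁻¹ := by
    rw [hzdef]
    have h1 : (1 + (n : ℝ) * α) ≠ 0 := by positivity
    field_simp
    ring
  have hval : ((1 + (n : ℝ) * α) ^ (-x / α)) * (1 - z) ^ (-(x / α)) = 1 := by
    rw [h1z, Real.inv_rpow (by positivity), Real.rpow_neg (by positivity), inv_inv,
      ← Real.rpow_add (by positivity), neg_div, neg_add_cancel, Real.rpow_zero]
  have hfun : wgt n α x = fun i => (1 + (n : ℝ) * α) ^ (-x / α) * (bc (x / α) i * z ^ i) :=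
    funext fun i => wgt_eq_bc hn hα i
  rw [hval] at h1
  rw [hfun]
  exact h1

lemma wgt_succ (hn : 0 < n) (hα : 0 < α) (i : ℕ) :
    wgt n α x (i + 1) = wgt n α x i * ((x + i * α) / (((i : ℝ) + 1) * (α + 1 / n))) := by
  have hN : (0 : ℝ) < n := Nat.cast_pos.mpr hn
  have ht0 : (0 : ℝ) < α + 1 / n := by positivity
  rw [wgt_eq_bc hn hα, wgt_eq_bc hn hα, bc_succ', pow_succ]
  have h2 : ((i : ℝ) + 1) ≠ 0 := by positivity
  field_simp

lemma summable_wgt_quad (hn : 0 < n) (hα : 0 < α) (hx : 0 ≤ x) :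
    Summable (fun i : ℕ => wgt n α x i * ((i : ℝ) + 1) * ((i : ℝ) + 2)) := by
  have hN : (0 : ℝ) < n := Nat.cast_pos.mpr hn
  have ht0 : (0 : ℝ) < α + 1 / n := by positivity
  have hz1 : α / (α + 1 / n) < 1 := by
    rw [div_lt_one ht0]
    have : (0 : ℝ) < 1 / n := by positivity
    linarith
  refine summable_of_ratio_tendsto
    (f := fun i : ℕ => wgt n α x i * ((i : ℝ) + 1) * ((i : ℝ) + 2))
    (ρ := fun i : ℕ => ((x - α) / ((i : ℝ) + 1) + α) * (2 / ((i : ℝ) + 1) + 1) / (α + 1 / n))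
    (fun i => mul_nonneg (mul_nonneg (wgt_nonneg hn hα hx i) (by positivity)) (by positivity))
    (fun i => ?_) (fun i => ?_) hz1 ?_
  · have h2 : ((i : ℝ) + 1) ≠ 0 := by positivity
    show wgt n α x (i + 1) * (((i + 1 : ℕ) : ℝ) + 1) * (((i + 1 : ℕ) : ℝ) + 2) = _
    rw [wgt_succ hn hα]
    push_cast
    field_simp
    ring
  · have hx' : 0 ≤ (x - α) / ((i : ℝ) + 1) + α := by
      have hle : -α ≤ (x - α) / ((i : ℝ) + 1) := by
        rw [le_div_iff₀ (by positivity : (0:ℝ) < (i : ℝ) + 1)]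
        nlinarith [Nat.cast_nonneg (α := ℝ) i]
      linarith
    positivity
  · have h : Tendsto (fun i : ℕ => ((x - α) / ((i : ℝ) + 1) + α) * (2 / ((i : ℝ) + 1) + 1)
        / (α + 1 / n)) atTop (nhds ((0 + α) * (0 + 1) / (α + 1 / n))) := by
      exact (((tendsto_aux (x - α)).add tendsto_const_nhds).mul
        ((tendsto_aux 2).add tendsto_const_nhds)).div_const _
    simpa using h

end Wgt


section Integrals

open MeasureTheory

lemma integral_pow_exp (m : ℕ) {b : ℝ} (hb : 0 < b) :
    ∫ u in Set.Ioi (0 : ℝ), u ^ m * Real.exp (-(b * u)) = (m.factorial : ℝ) / b ^ (m + 1) := by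
  have h := Real.integral_rpow_mul_exp_neg_mul_Ioi (a := (m : ℝ) + 1) (r := b) (by positivity) hb
  rw [show ((m : ℝ) + 1 - 1) = (m : ℝ) by ring] at h
  have e : ∀ t : ℝ, t ^ ((m : ℝ)) * Real.exp (-(b * t)) = t ^ m * Real.exp (-(b * t)) := by
    intro t
    rw [Real.rpow_natCast]
  simp_rw [e] at h
  rw [h, Real.Gamma_nat_eq_factorial]
  rw [show ((m : ℝ) + 1) = ((m + 1 : ℕ) : ℝ) by push_cast; ring, Real.rpow_natCast]
  rw [one_div, inv_pow]
  ring

lemma integrableOn_pow_exp (m : ℕ) {b : ℝ} (hb : 0 < b) :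
    IntegrableOn (fun u : ℝ => u ^ m * Real.exp (-(b * u))) (Set.Ioi 0) := by
  have h := integrableOn_rpow_mul_exp_neg_mul_rpow (s := (m : ℝ)) (p := 1)
    (lt_of_lt_of_le neg_one_lt_zero (Nat.cast_nonneg m)) zero_lt_one hb
  refine h.congr_fun (fun u hu => ?_) measurableSet_Ioi
  beta_reduce
  rw [Real.rpow_natCast, Real.rpow_one, neg_mul]

variable {n : ℕ}

lemma szasz_mul_pow_eq (i k : ℕ) (u : ℝ) :
    szaszBasis n i u * u ^ k =
      ((n : ℝ) ^ i / (i.factorial : ℝ)) * (u ^ (i + k) * Real.exp (-((n : ℝ) * u))) := by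
  simp only [szaszBasis, mul_pow, pow_add]
  ring

lemma integrableOn_szasz_pow (hn : 0 < n) (i k : ℕ) :
    IntegrableOn (fun u : ℝ => szaszBasis n i u * u ^ k) (Set.Ioi 0) := by
  have hN : (0 : ℝ) < n := Nat.cast_pos.mpr hn
  have h2 : IntegrableOn
      (fun u : ℝ => ((n : ℝ) ^ i / (i.factorial : ℝ)) * (u ^ (i + k) * Real.exp (-((n : ℝ) * u))))
      (Set.Ioi 0) := (integrableOn_pow_exp (i + k) hN).const_mul _
  exact h2.congr_fun (fun u _ => (szasz_mul_pow_eq i k u).symm) measurableSet_Ioi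

lemma integral_szasz_pow (hn : 0 < n) (i k : ℕ) :
    ∫ u in Set.Ioi (0 : ℝ), szaszBasis n i u * u ^ k =
      ((i + k).factorial : ℝ) / ((i.factorial : ℝ) * (n : ℝ) ^ (k + 1)) := by
  have hN : (0 : ℝ) < n := Nat.cast_pos.mpr hn
  have hfac : (0 : ℝ) < (i.factorial : ℝ) := by positivity
  simp_rw [szasz_mul_pow_eq]
  rw [integral_const_mul, integral_pow_exp (i + k) hN]
  rw [pow_add]
  field_simp
  ring

lemma integral_szasz_one (hn : 0 < n) (i : ℕ) :
    ∫ u in Set.Ioi (0 : ℝ), szaszBasis n i u = 1 / (n : ℝ) := by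
  have h := integral_szasz_pow hn i 0
  simp only [pow_zero, mul_one, Nat.add_zero, zero_add, pow_one] at h
  rw [h]
  have hfac : (0 : ℝ) < (i.factorial : ℝ) := by positivity
  have hN : (0 : ℝ) < n := Nat.cast_pos.mpr hn
  field_simp

lemma integrableOn_szasz_one (hn : 0 < n) (i : ℕ) :
    IntegrableOn (fun u : ℝ => szaszBasis n i u) (Set.Ioi 0) := by
  have h := integrableOn_szasz_pow hn i 0
  refine h.congr_fun (fun u _ => by simp) measurableSet_Ioi

lemma szasz_nonneg (i : ℕ) {u : ℝ} (hu : 0 ≤ u) : 0 ≤ szaszBasis n i u := by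
  have : (0 : ℝ) ≤ (n : ℝ) * u := by positivity
  rw [szaszBasis]
  positivity

lemma szasz_continuous (i : ℕ) : Continuous (szaszBasis n i) := by
  unfold szaszBasis
  fun_prop

lemma integrableOn_szasz_sq (hn : 0 < n) (i : ℕ) (x : ℝ) :
    IntegrableOn (fun u : ℝ => szaszBasis n i u * (u - x) ^ 2) (Set.Ioi 0) := by
  have e : (fun u : ℝ => szaszBasis n i u * (u - x) ^ 2) = fun u : ℝ =>
      szaszBasis n i u * u ^ 2 - (2 * x) * (szaszBasis n i u * u ^ 1) +
        x ^ 2 * (szaszBasis n i u * u ^ 0) := by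
    funext u
    ring
  rw [e]
  exact ((integrableOn_szasz_pow hn i 2).sub
    ((integrableOn_szasz_pow hn i 1).const_mul (2 * x))).add
    ((integrableOn_szasz_pow hn i 0).const_mul (x ^ 2))

lemma integral_szasz_sq (hn : 0 < n) (i : ℕ) (x : ℝ) :
    ∫ u in Set.Ioi (0 : ℝ), szaszBasis n i u * (u - x) ^ 2 =
      (((i + 2).factorial : ℝ) / ((i.factorial : ℝ) * (n : ℝ) ^ 3)
        - 2 * x * (((i + 1).factorial : ℝ) / ((i.factorial : ℝ) * (n : ℝ) ^ 2))
        + x ^ 2 * (1 / (n : ℝ))) := by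
  have e : (fun u : ℝ => szaszBasis n i u * (u - x) ^ 2) = fun u : ℝ =>
      szaszBasis n i u * u ^ 2 - (2 * x) * (szaszBasis n i u * u ^ 1) +
        x ^ 2 * szaszBasis n i u := by
    funext u
    simp [szaszBasis]
    ring
  rw [e]
  have I2 : IntegrableOn (fun u : ℝ => szaszBasis n i u * u ^ 2) (Set.Ioi 0) :=
    integrableOn_szasz_pow hn i 2
  have I1 : IntegrableOn (fun u : ℝ => 2 * x * (szaszBasis n i u * u ^ 1)) (Set.Ioi 0) :=
    (integrableOn_szasz_pow hn i 1).const_mul (2 * x)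
  have I12 : IntegrableOn
      (fun u : ℝ => szaszBasis n i u * u ^ 2 - 2 * x * (szaszBasis n i u * u ^ 1))
      (Set.Ioi 0) := I2.sub I1
  have I0 : IntegrableOn (fun u : ℝ => x ^ 2 * szaszBasis n i u) (Set.Ioi 0) :=
    (integrableOn_szasz_one hn i).const_mul (x ^ 2)
  rw [integral_add I12 I0, integral_sub I2 I1, integral_const_mul, integral_const_mul,
    integral_szasz_pow hn i 2, integral_szasz_pow hn i 1, integral_szasz_one hn i]

lemma integral_szasz_sq_nonneg (i : ℕ) (x : ℝ) :
    0 ≤ ∫ u in Set.Ioi (0 : ℝ), szaszBasis n i u * (u - x) ^ 2 := by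
  refine setIntegral_nonneg measurableSet_Ioi fun u hu => ?_
  exact mul_nonneg (szasz_nonneg i (le_of_lt hu)) (sq_nonneg _)

lemma integral_szasz_sq_le (hn : 0 < n) (i : ℕ) {x : ℝ} (hx : 0 ≤ x) :
    ∫ u in Set.Ioi (0 : ℝ), szaszBasis n i u * (u - x) ^ 2 ≤
      (1 / (n : ℝ) ^ 3 + x ^ 2 / (n : ℝ)) * (((i : ℝ) + 1) * ((i : ℝ) + 2)) := by
  have hN : (0 : ℝ) < n := Nat.cast_pos.mpr hn
  have hfac : (0 : ℝ) < (i.factorial : ℝ) := by positivity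
  rw [integral_szasz_sq hn i x]
  have h2 : ((i + 2).factorial : ℝ) = (((i : ℝ) + 1) * ((i : ℝ) + 2)) * (i.factorial : ℝ) := by
    rw [show i + 2 = i + 1 + 1 from rfl, Nat.factorial_succ, Nat.factorial_succ]
    push_cast
    ring
  have e3 : ((i + 2).factorial : ℝ) / ((i.factorial : ℝ) * (n : ℝ) ^ 3) =
      (((i : ℝ) + 1) * ((i : ℝ) + 2)) / (n : ℝ) ^ 3 := by
    rw [h2]
    field_simp
  rw [e3]
  have hA1 : (1 : ℝ) ≤ ((i : ℝ) + 1) * ((i : ℝ) + 2) := by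
    nlinarith [Nat.cast_nonneg (α := ℝ) i]
  have ht : 0 ≤ 2 * x * (((i + 1).factorial : ℝ) / ((i.factorial : ℝ) * (n : ℝ) ^ 2)) := by
    positivity
  have hxN : x ^ 2 * (1 / (n : ℝ)) ≤ x ^ 2 / (n : ℝ) * (((i : ℝ) + 1) * ((i : ℝ) + 2)) := by
    rw [mul_one_div]
    exact le_mul_of_one_le_right (by positivity) hA1
  ring_nf
  ring_nf at ht hxN
  nlinarith [ht, hxN]

end Integrals


section Meas

open MeasureTheory

/-- The density of the representing measure of `U`. -/
def dens (n : ℕ) (α x : ℝ) : ℝ → ENNReal := fun u =>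
  ∑' i : ℕ, ENNReal.ofReal ((n : ℝ) * wgt n α x i * szaszBasis n i u)

/-- The representing measure of `U`. -/
def meas (n : ℕ) (α x : ℝ) : Measure ℝ :=
  (volume.restrict (Set.Ioi 0)).withDensity (dens n α x)

lemma dens_measurable (n : ℕ) (α x : ℝ) : Measurable (dens n α x) :=
  Measurable.ennreal_tsum fun i =>
    ((szasz_continuous i).measurable.const_mul _).ennreal_ofReal

lemma lint_meas {n : ℕ} {α x : ℝ} (hn : 0 < n) (hα : 0 < α) (hx : 0 ≤ x) (h : ℝ → ℝ)
    (hmeas : Measurable h) (h0 : ∀ u, 0 ≤ h u)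
    (hInt : ∀ i, IntegrableOn (fun u => szaszBasis n i u * h u) (Set.Ioi 0))
    (hS : Summable (fun i => (n : ℝ) * wgt n α x i *
      ∫ u in Set.Ioi 0, szaszBasis n i u * h u)) :
    ∫⁻ u, ENNReal.ofReal (h u) ∂(meas n α x)
      = ENNReal.ofReal (∑' i : ℕ, (n : ℝ) * wgt n α x i *
          ∫ u in Set.Ioi 0, szaszBasis n i u * h u) := by
  have hN : (0 : ℝ) < n := Nat.cast_pos.mpr hn
  have hc0 : ∀ i, 0 ≤ (n : ℝ) * wgt n α x i := fun i =>
    mul_nonneg hN.le (wgt_nonneg hn hα hx i)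
  rw [meas, lintegral_withDensity_eq_lintegral_mul _ (dens_measurable n α x)
    hmeas.ennreal_ofReal]
  have e : ∀ u ∈ Set.Ioi (0 : ℝ), (dens n α x * fun u => ENNReal.ofReal (h u)) u
      = ∑' i : ℕ, ENNReal.ofReal ((n : ℝ) * wgt n α x i * szaszBasis n i u * h u) := by
    intro u hu
    simp only [Pi.mul_apply, dens]
    rw [← ENNReal.tsum_mul_right]
    refine tsum_congr fun i => ?_
    rw [← ENNReal.ofReal_mul (mul_nonneg (hc0 i) (szasz_nonneg i (le_of_lt hu)))]
  rw [setLIntegral_congr_fun measurableSet_Ioi e]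
  rw [lintegral_tsum (f := fun i u =>
      ENNReal.ofReal ((n : ℝ) * wgt n α x i * szaszBasis n i u * h u)) (fun i =>
    ((((szasz_continuous i).measurable.const_mul ((n : ℝ) * wgt n α x i)).mul
      hmeas).ennreal_ofReal).aemeasurable)]
  have eint : ∀ i : ℕ, ∫⁻ u in Set.Ioi 0,
      ENNReal.ofReal ((n : ℝ) * wgt n α x i * szaszBasis n i u * h u)
      = ENNReal.ofReal ((n : ℝ) * wgt n α x i *
          ∫ u in Set.Ioi 0, szaszBasis n i u * h u) := by
    intro i
    have hInt' : IntegrableOn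
        (fun u => (n : ℝ) * wgt n α x i * (szaszBasis n i u * h u)) (Set.Ioi 0) :=
      (hInt i).const_mul _
    have hnn : (0 : ℝ → ℝ) ≤ᵐ[volume.restrict (Set.Ioi 0)]
        fun u => (n : ℝ) * wgt n α x i * (szaszBasis n i u * h u) := by
      filter_upwards [ae_restrict_mem measurableSet_Ioi] with u hu
      exact mul_nonneg (hc0 i) (mul_nonneg (szasz_nonneg i (le_of_lt hu)) (h0 u))
    have := (ofReal_integral_eq_lintegral_ofReal hInt' hnn).symm
    rw [integral_const_mul] at this
    rw [← this]
    congr 1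
    funext u
    rw [mul_assoc]
  simp_rw [eint]
  rw [← ENNReal.ofReal_tsum_of_nonneg (fun i => ?_) hS]
  exact mul_nonneg (hc0 i) (setIntegral_nonneg measurableSet_Ioi fun u hu =>
    mul_nonneg (szasz_nonneg i (le_of_lt hu)) (h0 u))

lemma meas_univ {n : ℕ} {α x : ℝ} (hn : 0 < n) (hα : 0 < α) (hx : 0 ≤ x) :
    meas n α x Set.univ = 1 := by
  have hN : (0 : ℝ) < n := Nat.cast_pos.mpr hn
  have hval : ∀ i : ℕ, (∫ u in Set.Ioi 0, szaszBasis n i u * (fun _ : ℝ => (1 : ℝ)) u)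
      = 1 / (n : ℝ) := by
    intro i
    rw [← integral_szasz_one hn i]
    exact setIntegral_congr_fun measurableSet_Ioi fun u _ => mul_one _
  have e2 : ∀ i : ℕ, (n : ℝ) * wgt n α x i *
      (∫ u in Set.Ioi 0, szaszBasis n i u * (fun _ : ℝ => (1 : ℝ)) u) = wgt n α x i := by
    intro i
    rw [hval i]
    field_simp
  have hS : Summable (fun i => (n : ℝ) * wgt n α x i *
      ∫ u in Set.Ioi 0, szaszBasis n i u * (fun _ : ℝ => (1 : ℝ)) u) :=
    ((hasSum_wgt hn hα hx).summable).congr fun i => (e2 i).symm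
  have h1 := lint_meas hn hα hx (fun _ => 1) measurable_const (fun _ => zero_le_one)
    (fun i => (integrableOn_szasz_one hn i).congr_fun (fun u _ => (mul_one _).symm)
      measurableSet_Ioi) hS
  rw [tsum_congr e2, (hasSum_wgt hn hα hx).tsum_eq] at h1
  simp only [ENNReal.ofReal_one] at h1
  rw [← h1]
  exact lintegral_one.symm


lemma holder_meas {n : ℕ} {α x : ℝ} (hn : 0 < n) (hα : 0 < α) (hx : 0 ≤ x)
    {r : ℝ} (hr0 : 0 < r) (hr1 : r ≤ 1) {A B : ℝ} (hB0 : 0 ≤ B)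
    (hA : ∫⁻ u, ENNReal.ofReal (|u - x| ^ r) ∂(meas n α x) = ENNReal.ofReal A)
    (hB : ∫⁻ u, ENNReal.ofReal ((u - x) ^ 2) ∂(meas n α x) = ENNReal.ofReal B) :
    A ≤ B ^ (r / 2) := by
  set μ := meas n α x with hμ
  have hp1 : 1 < 2 / r := by
    rw [lt_div_iff₀ hr0]
    linarith
  have hconj : (2 / r).HolderConjugate (Real.conjExponent (2 / r)) :=
    Real.HolderConjugate.conjExponent hp1
  have hfmeas : Measurable fun u : ℝ => ENNReal.ofReal (|u - x| ^ r) := by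
    have hcont : Continuous fun u : ℝ => |u - x| ^ r := by
      refine Continuous.rpow_const (continuous_abs.comp (continuous_id.sub continuous_const))
        fun u => Or.inr hr0.le
    exact hcont.measurable.ennreal_ofReal
  have hH := ENNReal.lintegral_mul_le_Lp_mul_Lq μ hconj hfmeas.aemeasurable
    (aemeasurable_const (b := (1 : ENNReal)))
  simp only [Pi.mul_apply, mul_one] at hH
  have e1 : ∀ u : ℝ, (ENNReal.ofReal (|u - x| ^ r)) ^ (2 / r)
      = ENNReal.ofReal ((u - x) ^ 2) := by
    intro u
    rw [ENNReal.ofReal_rpow_of_nonneg (Real.rpow_nonneg (abs_nonneg _) r) (by positivity),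
      ← Real.rpow_mul (abs_nonneg _) r (2 / r)]
    congr 1
    rw [show r * (2 / r) = 2 by field_simp]
    rw [show (2 : ℝ) = ((2 : ℕ) : ℝ) by norm_num, Real.rpow_natCast, sq_abs]
  have e2 : (∫⁻ u, (ENNReal.ofReal (|u - x| ^ r)) ^ (2 / r) ∂μ)
      = ENNReal.ofReal B := by
    rw [← hB]
    exact lintegral_congr fun u => e1 u
  have e3 : (∫⁻ (_ : ℝ), (1 : ENNReal) ^ (Real.conjExponent (2 / r)) ∂μ) = 1 := by
    simp only [ENNReal.one_rpow]
    rw [lintegral_one, meas_univ hn hα hx]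
  rw [hA, e2, e3, ENNReal.one_rpow, mul_one] at hH
  have e4 : (ENNReal.ofReal B) ^ (1 / (2 / r)) = ENNReal.ofReal (B ^ (r / 2)) := by
    rw [ENNReal.ofReal_rpow_of_nonneg hB0 (by positivity)]
    congr 1
    rw [one_div_div]
  rw [e4] at hH
  exact (ENNReal.ofReal_le_ofReal_iff (Real.rpow_nonneg hB0 _)).mp hH


lemma abs_rpow_le_one_add_sq {r : ℝ} (hr0 : 0 < r) (hr1 : r ≤ 1) (t : ℝ) :
    |t| ^ r ≤ 1 + t ^ 2 := by
  rcases le_or_gt (|t|) 1 with h | h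
  · have h1 : |t| ^ r ≤ 1 := Real.rpow_le_one (abs_nonneg t) h hr0.le
    nlinarith [sq_nonneg t]
  · have h1 : |t| ^ r ≤ |t| ^ (1 : ℝ) := Real.rpow_le_rpow_of_exponent_le h.le hr1
    rw [Real.rpow_one] at h1
    have h2 : |t| ≤ t ^ 2 := by nlinarith [sq_abs t]
    linarith

end Meas

end Aux

open MeasureTheory in
theorem stmt11 (f : ℝ → ℝ) (hf : ContinuousOn f (Set.Ici 0))
    (hbd : ∃ C : ℝ, ∀ t : ℝ, 0 ≤ t → |f t| ≤ C)
    (r : ℝ) (hr0 : 0 < r) (hr1 : r ≤ 1) (x : ℝ) (hx : 0 ≤ x)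
    (hfin : BddAbove {y | ∃ s : ℝ, 0 ≤ s ∧ s ≠ x ∧ y = |f s - f x| / |s - x| ^ r})
    (n : ℕ) (hn : 0 < n) (α : ℝ) (hα : 0 < α) (hαn : α ≤ 1 / n) :
    |U n α f x - f x| ≤
      sSup {y | ∃ s : ℝ, 0 ≤ s ∧ s ≠ x ∧ y = |f s - f x| / |s - x| ^ r} *
        theta n α 2 x ^ (r / 2) := by
  obtain ⟨C, hC⟩ := hbd
  have hC0 : 0 ≤ C := le_trans (abs_nonneg _) (hC 0 le_rfl)
  have hN : (0 : ℝ) < n := Nat.cast_pos.mpr hn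
  set κ : ℝ := sSup {y | ∃ s : ℝ, 0 ≤ s ∧ s ≠ x ∧ y = |f s - f x| / |s - x| ^ r} with hκdef
  have hmem : (|f (x + 1) - f x| / |x + 1 - x| ^ r) ∈
      {y | ∃ s : ℝ, 0 ≤ s ∧ s ≠ x ∧ y = |f s - f x| / |s - x| ^ r} :=
    ⟨x + 1, by linarith, by intro h; linarith [congrArg id h], rfl⟩
  have hκ0 : 0 ≤ κ := le_trans (by positivity) (le_csSup hfin hmem)
  have hpt : ∀ s : ℝ, 0 ≤ s → |f s - f x| ≤ κ * |s - x| ^ r := by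
    intro s hs
    rcases eq_or_ne s x with h | h
    · subst h
      simp [Real.zero_rpow hr0.ne']
    · have hsx : 0 < |s - x| := abs_pos.mpr (sub_ne_zero.mpr h)
      have hsxr : 0 < |s - x| ^ r := Real.rpow_pos_of_pos hsx r
      have hy := le_csSup hfin ⟨s, hs, h, rfl⟩
      rw [div_le_iff₀ hsxr] at hy
      linarith
  set W : ℕ → ℝ := wgt n α x with hWdef
  have hW0 : ∀ i, 0 ≤ W i := wgt_nonneg hn hα hx
  set fx : ℝ := f x with hfxdef
  -- integrability facts
  have hmf : AEStronglyMeasurable f (volume.restrict (Set.Ioi 0)) :=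
    (hf.mono (Set.Ioi_subset_Ici le_rfl)).aestronglyMeasurable measurableSet_Ioi
  have hIf : ∀ i, IntegrableOn (fun u => szaszBasis n i u * f u) (Set.Ioi 0) := by
    intro i
    refine Integrable.mono ((integrableOn_szasz_one hn i).const_mul C)
      (((szasz_continuous i).aestronglyMeasurable).mul hmf) ?_
    filter_upwards [ae_restrict_mem measurableSet_Ioi] with u hu
    have hs0 : 0 ≤ szaszBasis n i u := szasz_nonneg i (le_of_lt hu)
    have h1 : ‖szaszBasis n i u * f u‖ = szaszBasis n i u * |f u| := by
      rw [norm_mul, Real.norm_eq_abs, Real.norm_eq_abs, abs_of_nonneg hs0]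
    rw [h1, Real.norm_eq_abs, abs_of_nonneg (mul_nonneg hC0 hs0)]
    calc szaszBasis n i u * |f u| ≤ szaszBasis n i u * C :=
          mul_le_mul_of_nonneg_left (hC u (le_of_lt hu)) hs0
      _ = C * szaszBasis n i u := by ring
  have hIcst : ∀ i, IntegrableOn (fun u => szaszBasis n i u * fx) (Set.Ioi 0) := fun i =>
    (integrableOn_szasz_one hn i).mul_const fx
  have hIdiff : ∀ i, IntegrableOn (fun u => szaszBasis n i u * (f u - fx)) (Set.Ioi 0) := by
    intro i
    refine IntegrableOn.congr_fun ((hIf i).sub (hIcst i)) (fun u _ => ?_) measurableSet_Ioi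
    simp only [Pi.sub_apply]
    ring
  have hIabs : ∀ i, IntegrableOn (fun u => szaszBasis n i u * |f u - fx|) (Set.Ioi 0) := by
    intro i
    refine IntegrableOn.congr_fun ((hIdiff i).abs) (fun u hu => ?_) measurableSet_Ioi
    rw [abs_mul, abs_of_nonneg (szasz_nonneg i (le_of_lt hu))]
  have hcont₁ : Continuous (fun u : ℝ => |u - x| ^ r) :=
    Continuous.rpow_const (continuous_abs.comp (continuous_id.sub continuous_const))
      fun u => Or.inr hr0.le
  have hIh₁ : ∀ i, IntegrableOn (fun u => szaszBasis n i u * |u - x| ^ r) (Set.Ioi 0) := by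
    intro i
    refine Integrable.mono ((integrableOn_szasz_one hn i).add (integrableOn_szasz_sq hn i x))
      (((szasz_continuous i).mul hcont₁).aestronglyMeasurable) ?_
    filter_upwards [ae_restrict_mem measurableSet_Ioi] with u hu
    have hs0 : 0 ≤ szaszBasis n i u := szasz_nonneg i (le_of_lt hu)
    have hb := abs_rpow_le_one_add_sq hr0 hr1 (u - x)
    have hrn : 0 ≤ |u - x| ^ r := Real.rpow_nonneg (abs_nonneg _) r
    simp only [Pi.add_apply]
    rw [Real.norm_eq_abs, Real.norm_eq_abs, abs_of_nonneg (mul_nonneg hs0 hrn),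
      abs_of_nonneg (by nlinarith [sq_nonneg (u - x)] : (0:ℝ) ≤ szaszBasis n i u +
        szaszBasis n i u * (u - x) ^ 2)]
    nlinarith [mul_le_mul_of_nonneg_left hb hs0]
  -- summability facts
  have SW : Summable W := (hasSum_wgt hn hα hx).summable
  have Squad : Summable (fun i : ℕ => W i * ((i : ℝ) + 1) * ((i : ℝ) + 2)) :=
    summable_wgt_quad hn hα hx
  have SJ : Summable (fun i => W i * ∫ u in Set.Ioi 0, szaszBasis n i u * (u - x) ^ 2) := by
    refine Summable.of_nonneg_of_le
      (fun i => mul_nonneg (hW0 i) (integral_szasz_sq_nonneg i x)) (fun i => ?_)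
      (Squad.mul_left (1 / (n : ℝ) ^ 3 + x ^ 2 / (n : ℝ)))
    calc W i * ∫ u in Set.Ioi 0, szaszBasis n i u * (u - x) ^ 2
        ≤ W i * ((1 / (n : ℝ) ^ 3 + x ^ 2 / (n : ℝ)) * (((i : ℝ) + 1) * ((i : ℝ) + 2))) :=
          mul_le_mul_of_nonneg_left (integral_szasz_sq_le hn i hx) (hW0 i)
      _ = (1 / (n : ℝ) ^ 3 + x ^ 2 / (n : ℝ)) * (W i * ((i : ℝ) + 1) * ((i : ℝ) + 2)) := by
          ring
  have hIone : ∀ i, (∫ u in Set.Ioi 0, szaszBasis n i u) = 1 / (n : ℝ) :=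
    fun i => integral_szasz_one hn i
  have hIh₁_nonneg : ∀ i, 0 ≤ ∫ u in Set.Ioi 0, szaszBasis n i u * |u - x| ^ r := by
    intro i
    refine setIntegral_nonneg measurableSet_Ioi fun u hu => ?_
    exact mul_nonneg (szasz_nonneg i (le_of_lt hu)) (Real.rpow_nonneg (abs_nonneg _) r)
  have hIh₁_le : ∀ i, (∫ u in Set.Ioi 0, szaszBasis n i u * |u - x| ^ r)
      ≤ 1 / (n : ℝ) + ∫ u in Set.Ioi 0, szaszBasis n i u * (u - x) ^ 2 := by
    intro i
    have hmono := setIntegral_mono_on (hIh₁ i)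
      ((integrableOn_szasz_one hn i).add (integrableOn_szasz_sq hn i x))
      measurableSet_Ioi (fun u hu => ?_)
    · simp only [Pi.add_apply] at hmono
      rw [integral_add (integrableOn_szasz_one hn i) (integrableOn_szasz_sq hn i x),
        hIone i] at hmono
      exact hmono
    · have hs0 : 0 ≤ szaszBasis n i u := szasz_nonneg i (le_of_lt hu)
      have hb := abs_rpow_le_one_add_sq hr0 hr1 (u - x)
      simp only [Pi.add_apply]
      nlinarith [mul_le_mul_of_nonneg_left hb hs0]
  have Sh₁ : Summable (fun i => W i * ∫ u in Set.Ioi 0, szaszBasis n i u * |u - x| ^ r) := by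
    refine Summable.of_nonneg_of_le (fun i => mul_nonneg (hW0 i) (hIh₁_nonneg i))
      (fun i => ?_) ((SW.mul_right (1 / (n : ℝ))).add SJ)
    calc W i * ∫ u in Set.Ioi 0, szaszBasis n i u * |u - x| ^ r
        ≤ W i * (1 / (n : ℝ) + ∫ u in Set.Ioi 0, szaszBasis n i u * (u - x) ^ 2) :=
          mul_le_mul_of_nonneg_left (hIh₁_le i) (hW0 i)
      _ = W i * (1 / (n : ℝ)) + W i * ∫ u in Set.Ioi 0, szaszBasis n i u * (u - x) ^ 2 := by
          ring
  have hIabs_bnd : ∀ i, (∫ u in Set.Ioi 0, szaszBasis n i u * |f u - fx|)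
      ≤ (C + |fx|) / (n : ℝ) := by
    intro i
    have hmono := setIntegral_mono_on (hIabs i)
      ((integrableOn_szasz_one hn i).const_mul (C + |fx|)) measurableSet_Ioi (fun u hu => ?_)
    · rw [integral_const_mul, hIone i] at hmono
      calc (∫ u in Set.Ioi 0, szaszBasis n i u * |f u - fx|)
          ≤ (C + |fx|) * (1 / (n : ℝ)) := hmono
        _ = (C + |fx|) / (n : ℝ) := by ring
    · have hs0 : 0 ≤ szaszBasis n i u := szasz_nonneg i (le_of_lt hu)
      have h2 : |f u - fx| ≤ C + |fx| := by
        calc |f u - fx| ≤ |f u| + |fx| := abs_sub _ _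
          _ ≤ C + |fx| := by linarith [hC u (le_of_lt hu)]
      calc szaszBasis n i u * |f u - fx| ≤ szaszBasis n i u * (C + |fx|) :=
            mul_le_mul_of_nonneg_left h2 hs0
        _ = (C + |fx|) * szaszBasis n i u := by ring
  have hIabs_nonneg : ∀ i, 0 ≤ ∫ u in Set.Ioi 0, szaszBasis n i u * |f u - fx| := by
    intro i
    refine setIntegral_nonneg measurableSet_Ioi fun u hu => ?_
    exact mul_nonneg (szasz_nonneg i (le_of_lt hu)) (abs_nonneg _)
  have Sabs : Summable (fun i => W i * ∫ u in Set.Ioi 0, szaszBasis n i u * |f u - fx|) := by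
    refine Summable.of_nonneg_of_le (fun i => mul_nonneg (hW0 i) (hIabs_nonneg i))
      (fun i => mul_le_mul_of_nonneg_left (hIabs_bnd i) (hW0 i))
      (SW.mul_right ((C + |fx|) / (n : ℝ)))
  have hIdiff_abs : ∀ i, |∫ u in Set.Ioi 0, szaszBasis n i u * (f u - fx)|
      ≤ ∫ u in Set.Ioi 0, szaszBasis n i u * |f u - fx| := by
    intro i
    have h1 := norm_integral_le_integral_norm (μ := volume.restrict (Set.Ioi 0))
      (fun u => szaszBasis n i u * (f u - fx))
    rw [Real.norm_eq_abs] at h1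
    refine h1.trans (le_of_eq ?_)
    refine setIntegral_congr_fun measurableSet_Ioi fun u hu => ?_
    rw [Real.norm_eq_abs, abs_mul, abs_of_nonneg (szasz_nonneg i (le_of_lt hu))]
  have Sdiff : Summable (fun i => W i * ∫ u in Set.Ioi 0, szaszBasis n i u * (f u - fx)) := by
    refine Summable.of_norm_bounded
      ((SW.mul_right ((C + |fx|) / (n : ℝ)))) (fun i => ?_)
    rw [Real.norm_eq_abs, abs_mul, abs_of_nonneg (hW0 i)]
    exact mul_le_mul_of_nonneg_left ((hIdiff_abs i).trans (hIabs_bnd i)) (hW0 i)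
  have Sf : Summable (fun i => W i * ∫ u in Set.Ioi 0, szaszBasis n i u * f u) := by
    refine Summable.of_norm_bounded (SW.mul_right (C / (n : ℝ))) (fun i => ?_)
    rw [Real.norm_eq_abs, abs_mul, abs_of_nonneg (hW0 i)]
    refine mul_le_mul_of_nonneg_left ?_ (hW0 i)
    have h1 := norm_integral_le_integral_norm (μ := volume.restrict (Set.Ioi 0))
      (fun u => szaszBasis n i u * f u)
    rw [Real.norm_eq_abs] at h1
    simp_rw [Real.norm_eq_abs] at h1
    refine h1.trans ?_
    have hmono := setIntegral_mono_on ((hIf i).abs)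
      ((integrableOn_szasz_one hn i).const_mul C) measurableSet_Ioi (fun u hu => ?_)
    · rw [integral_const_mul, hIone i] at hmono
      calc (∫ u in Set.Ioi 0, |szaszBasis n i u * f u|) ≤ C * (1 / (n : ℝ)) := hmono
        _ = C / (n : ℝ) := by ring
    · have hs0 : 0 ≤ szaszBasis n i u := szasz_nonneg i (le_of_lt hu)
      rw [abs_mul, abs_of_nonneg hs0]
      calc szaszBasis n i u * |f u| ≤ szaszBasis n i u * C :=
            mul_le_mul_of_nonneg_left (hC u (le_of_lt hu)) hs0
        _ = C * szaszBasis n i u := by ring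
  have Scst : Summable (fun i => W i * (fx / (n : ℝ))) := SW.mul_right _
  -- step 1 : representation of the difference
  have hUf : U n α f x = (n : ℝ) * ∑' i, W i * ∫ u in Set.Ioi 0, szaszBasis n i u * f u := rfl
  have hIdiff_val : ∀ i, (∫ u in Set.Ioi 0, szaszBasis n i u * (f u - fx))
      = (∫ u in Set.Ioi 0, szaszBasis n i u * f u) - fx / (n : ℝ) := by
    intro i
    rw [setIntegral_congr_fun measurableSet_Ioi
      (fun u _ => (mul_sub (szaszBasis n i u) (f u) fx : _)),
      integral_sub (hIf i) (hIcst i), integral_mul_const, hIone i]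
    ring
  have step1 : U n α f x - fx
      = (n : ℝ) * ∑' i, W i * ∫ u in Set.Ioi 0, szaszBasis n i u * (f u - fx) := by
    have hfx2 : fx = (n : ℝ) * ∑' i, W i * (fx / (n : ℝ)) := by
      rw [tsum_mul_right, (hasSum_wgt hn hα hx).tsum_eq]
      field_simp
    calc U n α f x - fx
        = (n : ℝ) * (∑' i, W i * ∫ u in Set.Ioi 0, szaszBasis n i u * f u)
          - (n : ℝ) * ∑' i, W i * (fx / (n : ℝ)) := by rw [hUf, ← hfx2]
      _ = (n : ℝ) * ((∑' i, W i * ∫ u in Set.Ioi 0, szaszBasis n i u * f u)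
          - ∑' i, W i * (fx / (n : ℝ))) := by ring
      _ = (n : ℝ) * ∑' i, (W i * (∫ u in Set.Ioi 0, szaszBasis n i u * f u)
          - W i * (fx / (n : ℝ))) := by rw [Summable.tsum_sub Sf Scst]
      _ = (n : ℝ) * ∑' i, W i * ∫ u in Set.Ioi 0, szaszBasis n i u * (f u - fx) := by
          congr 1
          refine tsum_congr fun i => ?_
          rw [hIdiff_val i]
          ring
  -- step 2 : bound by absolute values
  have SdiffAbs : Summable (fun i => |W i * ∫ u in Set.Ioi 0, szaszBasis n i u * (f u - fx)|) := by
    refine Summable.of_nonneg_of_le (fun i => abs_nonneg _) (fun i => ?_) Sabs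
    rw [abs_mul, abs_of_nonneg (hW0 i)]
    exact mul_le_mul_of_nonneg_left (hIdiff_abs i) (hW0 i)
  have step2 : |U n α f x - fx|
      ≤ (n : ℝ) * ∑' i, W i * ∫ u in Set.Ioi 0, szaszBasis n i u * |f u - fx| := by
    rw [step1, abs_mul, abs_of_nonneg hN.le]
    refine mul_le_mul_of_nonneg_left ?_ hN.le
    calc |∑' i, W i * ∫ u in Set.Ioi 0, szaszBasis n i u * (f u - fx)|
        ≤ ∑' i, |W i * ∫ u in Set.Ioi 0, szaszBasis n i u * (f u - fx)| := by
          have hns : Summable (fun i => ‖W i * ∫ u in Set.Ioi 0,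
              szaszBasis n i u * (f u - fx)‖) := by
            simp only [Real.norm_eq_abs]
            exact SdiffAbs
          have h3 := norm_tsum_le_tsum_norm hns
          simp only [Real.norm_eq_abs] at h3
          exact h3
      _ ≤ ∑' i, W i * ∫ u in Set.Ioi 0, szaszBasis n i u * |f u - fx| := by
          refine Summable.tsum_le_tsum (fun i => ?_) SdiffAbs Sabs
          rw [abs_mul, abs_of_nonneg (hW0 i)]
          exact mul_le_mul_of_nonneg_left (hIdiff_abs i) (hW0 i)
  -- step 3 : Lipschitz-type bound
  have hIabs_le : ∀ i, (∫ u in Set.Ioi 0, szaszBasis n i u * |f u - fx|)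
      ≤ κ * ∫ u in Set.Ioi 0, szaszBasis n i u * |u - x| ^ r := by
    intro i
    have hmono := setIntegral_mono_on (hIabs i) ((hIh₁ i).const_mul κ)
      measurableSet_Ioi (fun u hu => ?_)
    · rw [integral_const_mul] at hmono
      exact hmono
    · have hs0 : 0 ≤ szaszBasis n i u := szasz_nonneg i (le_of_lt hu)
      calc szaszBasis n i u * |f u - fx| ≤ szaszBasis n i u * (κ * |u - x| ^ r) :=
            mul_le_mul_of_nonneg_left (hpt u (le_of_lt hu)) hs0
        _ = κ * (szaszBasis n i u * |u - x| ^ r) := by ring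
  have step3 : (∑' i, W i * ∫ u in Set.Ioi 0, szaszBasis n i u * |f u - fx|)
      ≤ κ * ∑' i, W i * ∫ u in Set.Ioi 0, szaszBasis n i u * |u - x| ^ r := by
    rw [← tsum_mul_left]
    refine Summable.tsum_le_tsum (fun i => ?_) Sabs ((Sh₁.mul_left κ).congr fun i => by ring)
    calc W i * ∫ u in Set.Ioi 0, szaszBasis n i u * |f u - fx|
        ≤ W i * (κ * ∫ u in Set.Ioi 0, szaszBasis n i u * |u - x| ^ r) :=
          mul_le_mul_of_nonneg_left (hIabs_le i) (hW0 i)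
      _ = κ * (W i * ∫ u in Set.Ioi 0, szaszBasis n i u * |u - x| ^ r) := by ring
  -- A and B
  set A : ℝ := (n : ℝ) * ∑' i, W i * ∫ u in Set.Ioi 0, szaszBasis n i u * |u - x| ^ r with hAdef
  have hkey : |U n α f x - fx| ≤ κ * A := by
    calc |U n α f x - fx|
        ≤ (n : ℝ) * ∑' i, W i * ∫ u in Set.Ioi 0, szaszBasis n i u * |f u - fx| := step2
      _ ≤ (n : ℝ) * (κ * ∑' i, W i * ∫ u in Set.Ioi 0, szaszBasis n i u * |u - x| ^ r) :=
          mul_le_mul_of_nonneg_left step3 hN.le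
      _ = κ * A := by rw [hAdef]; ring
  -- Hölder via the representing measure
  have S₁' : Summable (fun i => (n : ℝ) * W i *
      ∫ u in Set.Ioi 0, szaszBasis n i u * |u - x| ^ r) :=
    (Sh₁.mul_left (n : ℝ)).congr fun i => by ring
  have hlint₁ := lint_meas hn hα hx (fun u => |u - x| ^ r) hcont₁.measurable
    (fun u => Real.rpow_nonneg (abs_nonneg _) r) hIh₁ S₁'
  have hA : ∫⁻ u, ENNReal.ofReal (|u - x| ^ r) ∂(meas n α x) = ENNReal.ofReal A := by
    rw [hlint₁, hAdef, ← tsum_mul_left]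
    congr 1
    exact tsum_congr fun i => by ring
  have hcont₂ : Continuous (fun u : ℝ => (u - x) ^ 2) := by fun_prop
  have S₂' : Summable (fun i => (n : ℝ) * W i *
      ∫ u in Set.Ioi 0, szaszBasis n i u * (u - x) ^ 2) :=
    (SJ.mul_left (n : ℝ)).congr fun i => by ring
  have hlint₂ := lint_meas hn hα hx (fun u => (u - x) ^ 2) hcont₂.measurable
    (fun u => sq_nonneg _) (fun i => integrableOn_szasz_sq hn i x) S₂'
  have hBdef : theta n α 2 x
      = (n : ℝ) * ∑' i, W i * ∫ u in Set.Ioi 0, szaszBasis n i u * (u - x) ^ 2 := rfl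
  have hB0 : 0 ≤ theta n α 2 x := by
    rw [hBdef]
    refine mul_nonneg hN.le (tsum_nonneg fun i => ?_)
    exact mul_nonneg (hW0 i) (integral_szasz_sq_nonneg i x)
  have hB : ∫⁻ u, ENNReal.ofReal ((u - x) ^ 2) ∂(meas n α x)
      = ENNReal.ofReal (theta n α 2 x) := by
    rw [hlint₂, hBdef, ← tsum_mul_left]
    congr 1
    exact tsum_congr fun i => by ring
  have hfinal : A ≤ theta n α 2 x ^ (r / 2) :=
    holder_meas hn hα hx hr0 hr1 hB0 hA hB
  calc |U n α f x - f x| = |U n α f x - fx| := rfl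
    _ ≤ κ * A := hkey
    _ ≤ κ * theta n α 2 x ^ (r / 2) := mul_le_mul_of_nonneg_left hfinal hκ0
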